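/- Let n ≥ 1, let 0 ≤ k ≤ n−1, and let 0 ≤ m ≤ n. Then (k+1)·a_{n,m,k} = C(n−1,k)·C(n,k), where C(a,b) denotes the binomial coefficient; that is, the number of Dyck paths of semilength n with exactly m flaws and exactly k double ascents equals the Narayana number (1/(k+1))·C(n−1,k)·C(n,k), independently of m. -/

import Mathlib

/-- The height of a path (list of steps; `true` = up step `U`, `false` = down step `D`)
after all its steps: #U − #D. -/
def height (l : List Bool) : ℤ := (l.count true : ℤ) - (l.count false : ℤ)

/-- `l` is a Dyck path of semilength `n`: `2n` steps ending at height `0`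
(equivalently, exactly `n` up steps). It may go below the x-axis. -/
def IsDyck (n : ℕ) (l : List Bool) : Prop := l.length = 2 * n ∧ l.count true = n

/-- The number of flaws: up steps starting at negative height. -/
def flaws (l : List Bool) : ℕ :=
  ((Finset.range l.length).filter
    (fun i => l.getD i false = true ∧ height (l.take i) < 0)).card

/-- The number of peaks: positions where an up step is immediately followed by a down step. -/
def peaks (l : List Bool) : ℕ :=
  ((Finset.range (l.length - 1)).filter
    (fun i => l.getD i false = true ∧ l.getD (i + 1) false = false)).card

/-- The number of valleys: positions where a down step is immediately followed by an up step. -/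
def valleys (l : List Bool) : ℕ :=
  ((Finset.range (l.length - 1)).filter
    (fun i => l.getD i false = false ∧ l.getD (i + 1) false = true)).card

/-- The number of double ascents: positions of two consecutive up steps. -/
def dascents (l : List Bool) : ℕ :=
  ((Finset.range (l.length - 1)).filter
    (fun i => l.getD i false = true ∧ l.getD (i + 1) false = true)).card

/-- The number of double descents: positions of two consecutive down steps. -/
def ddescents (l : List Bool) : ℕ :=
  ((Finset.range (l.length - 1)).filter
    (fun i => l.getD i false = false ∧ l.getD (i + 1) false = false)).card

/-- `p n m k`: the number of Dyck paths of semilength `n` with `m` flaws and `k` peaks. -/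
noncomputable def p (n m k : ℕ) : ℕ :=
  Nat.card {l : List Bool // IsDyck n l ∧ flaws l = m ∧ peaks l = k}

/-- `v n m k`: the number of Dyck paths of semilength `n` with `m` flaws and `k` valleys. -/
noncomputable def v (n m k : ℕ) : ℕ :=
  Nat.card {l : List Bool // IsDyck n l ∧ flaws l = m ∧ valleys l = k}

/-- `a n m k`: the number of Dyck paths of semilength `n` with `m` flaws and `k` double ascents. -/
noncomputable def a (n m k : ℕ) : ℕ :=
  Nat.card {l : List Bool // IsDyck n l ∧ flaws l = m ∧ dascents l = k}

/-- `d n m k`: the number of Dyck paths of semilength `n` with `m` flaws and `k` double descents. -/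
noncomputable def d (n m k : ℕ) : ℕ :=
  Nat.card {l : List Bool // IsDyck n l ∧ flaws l = m ∧ ddescents l = k}

namespace DCF

open Finset

/-- number of steps equal to `b` whose starting height is negative, starting from height `h`. -/
def cnt (b : Bool) : ℤ → List Bool → ℕ
  | _, [] => 0
  | h, a :: t => (if a = b ∧ h < 0 then 1 else 0) + cnt b (h + (if a then 1 else -1)) t

/-- number of double ascents, recursively. -/
def das : List Bool → ℕ
  | [] => 0
  | a :: t => (if a = true ∧ t.head? = some true then 1 else 0) + das t

lemma cnt_cons_false (b : Bool) (h : ℤ) (t : List Bool) :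
    cnt b h (false :: t) = (if b = false ∧ h < 0 then 1 else 0) + cnt b (h - 1) t := by
  show (if false = b ∧ h < 0 then 1 else 0) + cnt b (h + -1) t = _
  rw [show h + -1 = h - 1 by ring]
  congr 1
  exact if_congr (by constructor <;> (rintro ⟨x, y⟩; exact ⟨x.symm, y⟩)) rfl rfl

lemma cnt_cons_true (b : Bool) (h : ℤ) (t : List Bool) :
    cnt b h (true :: t) = (if b = true ∧ h < 0 then 1 else 0) + cnt b (h + 1) t := by
  show (if true = b ∧ h < 0 then 1 else 0) + cnt b (h + 1) t = _
  congr 1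
  exact if_congr (by constructor <;> (rintro ⟨x, y⟩; exact ⟨x.symm, y⟩)) rfl rfl

@[simp] lemma height_nil : height [] = 0 := rfl

lemma height_cons (a : Bool) (t : List Bool) :
    height (a :: t) = (if a then 1 else -1) + height t := by
  unfold height
  rcases a <;> simp [List.count_cons] <;> push_cast <;> ring

lemma height_append (x y : List Bool) : height (x ++ y) = height x + height y := by
  unfold height; simp [List.count_append]; push_cast; ring

lemma card_filter_range_succ (p : ℕ → Prop) [DecidablePred p] (j : ℕ) :
    ((range (j+1)).filter p).card
      = (if p 0 then 1 else 0) + ((range j).filter (fun i => p (i+1))).card := by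
  rw [Finset.card_filter, Finset.card_filter, Finset.sum_range_succ']
  ring

lemma cnt_eq (b : Bool) (h : ℤ) (l : List Bool) :
    ((range l.length).filter (fun i => l.getD i false = b ∧ h + height (l.take i) < 0)).card
      = cnt b h l := by
  induction l generalizing h with
  | nil => simp [cnt]
  | cons a t ih =>
    rw [List.length_cons, card_filter_range_succ]
    have h0 : ((a :: t).getD 0 false = b ∧ h + height ((a :: t).take 0) < 0) ↔ (a = b ∧ h < 0) := by
      simp
    have h1 : ∀ i, ((a :: t).getD (i+1) false = b ∧ h + height ((a :: t).take (i+1)) < 0)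
        ↔ (t.getD i false = b ∧ (h + (if a then 1 else -1)) + height (t.take i) < 0) := by
      intro i
      simp only [List.getD_cons_succ, List.take_succ_cons, height_cons]
      constructor <;> (rintro ⟨h1, h2⟩; exact ⟨h1, by omega⟩)
    rw [Finset.filter_congr (fun i _ => h1 i)]
    simp only [cnt, ih]
    congr 1
    exact if_congr h0 rfl rfl

lemma flaws_eq (l : List Bool) : flaws l = cnt true 0 l := by
  rw [← cnt_eq]
  unfold flaws
  congr 1
  apply Finset.filter_congr
  intro i _
  simp

lemma dascents_eq (l : List Bool) : dascents l = das l := by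
  induction l with
  | nil => simp [dascents, das]
  | cons a t ih =>
    rcases t with _ | ⟨c, t'⟩
    · simp [dascents, das]
    · have : dascents (a :: c :: t') =
          (if ((a :: c :: t').getD 0 false = true ∧ (a :: c :: t').getD 1 false = true) then 1 else 0)
          + dascents (c :: t') := by
        unfold dascents
        rw [List.length_cons, List.length_cons]
        simp only [Nat.add_sub_cancel]
        rw [card_filter_range_succ]
        rfl
      rw [this, ih]
      simp [das]

lemma count_pos_eq (b : Bool) (l : List Bool) :
    ((range l.length).filter (fun i => l.getD i false = b)).card = l.count b := by
  induction l with
  | nil => simp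
  | cons a t ih =>
    rw [List.length_cons, card_filter_range_succ]
    simp only [List.getD_cons_succ, List.getD_cons_zero, ih, List.count_cons]
    rcases Classical.em (a = b) with hc | hc
    · simp [hc]; omega
    · have : (a == b) = false := by simp [hc]
      simp [hc, this]

lemma cnt_append (b : Bool) (x y : List Bool) (h : ℤ) :
    cnt b h (x ++ y) = cnt b h x + cnt b (h + height x) y := by
  induction x generalizing h with
  | nil => simp [cnt]
  | cons a t ih =>
    simp only [List.cons_append, List.append_eq, cnt, height_cons, ih]
    ring

lemma das_append (x y : List Bool) :
    das (x ++ y) = das x + das y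
      + (if x.getLast? = some true ∧ y.head? = some true then 1 else 0) := by
  induction x with
  | nil => simp [das]
  | cons a t ih =>
    rcases t with _ | ⟨c, t'⟩
    · simp only [List.singleton_append, das, List.head?_nil, List.getLast?_singleton,
        Option.some.injEq]
      split_ifs with h1 h2 h3 <;> simp_all <;> omega
    · rw [List.cons_append,
        show das (a :: ((c :: t') ++ y)) =
          (if a = true ∧ ((c :: t') ++ y).head? = some true then 1 else 0)
            + das ((c :: t') ++ y) from rfl,
        ih,
        show ((c :: t') ++ y).head? = some c from rfl,
        show das (a :: c :: t') =
          (if a = true ∧ (c :: t').head? = some true then 1 else 0) + das (c :: t') from rfl,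
        show (c :: t').head? = some c from rfl,
        List.getLast?_cons_cons]
      ring

lemma cnt_le_count (b : Bool) (h : ℤ) (l : List Bool) : cnt b h l ≤ l.count b := by
  induction l generalizing h with
  | nil => simp [cnt]
  | cons a t ih =>
    have h1 := ih (h + 1)
    have h2 := ih (h - 1)
    rcases a <;> rcases b <;>
      simp only [cnt_cons_false, cnt_cons_true, List.count_cons, beq_iff_eq] <;>
      norm_num <;>
      first
        | (split_ifs <;> omega)
        | omega

lemma L1 (l : List Bool) : ∀ h : ℤ, (cnt true h l : ℤ) - cnt false (h-1) l
    = max 0 (min (h + height l) 0 - h) - max 0 (min h 0 - (h + height l)) := by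
  induction l with
  | nil => intro h; simp [cnt]
  | cons a t ih =>
    intro h
    rcases a
    · have key := ih (h - 1)
      rw [cnt_cons_false, cnt_cons_false, height_cons]
      norm_num
      omega
    · have key := ih (h + 1)
      rw [cnt_cons_true, cnt_cons_true, height_cons,
        show h - 1 + 1 = h + 1 - 1 from by ring]
      norm_num
      norm_num at key
      omega


lemma sum_range_add (f : ℕ → ℕ) (a b : ℕ) :
    ∑ i ∈ Finset.range (a+b), f i
      = (∑ i ∈ Finset.range a, f i) + ∑ i ∈ Finset.range b, f (a+i) := by
  have hdisj : Disjoint (Finset.range a) ((Finset.range b).map (addLeftEmbedding a)) := by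
    simp only [Finset.disjoint_left, Finset.mem_range, Finset.mem_map, addLeftEmbedding_apply]
    rintro x hx ⟨y, hy, rfl⟩
    omega
  rw [Finset.range_add, Finset.sum_union hdisj, Finset.sum_map]
  simp [addLeftEmbedding_apply]

lemma card_filter_range_split (L q : ℕ) (hq : q < L) (p : ℕ → Prop) [DecidablePred p] :
    ((range L).filter p).card
      = ((range q).filter p).card + (if p q then 1 else 0)
        + ((range (L - (q+1))).filter (fun i => p (q+1+i))).card := by
  rw [Finset.card_filter, Finset.card_filter, Finset.card_filter]
  have e : L = (q+1) + (L - (q+1)) := by omega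
  rw [show (range L) = range ((q+1) + (L - (q+1))) from by rw [← e]]
  rw [sum_range_add (fun i => if p i then 1 else 0) (q+1) (L - (q+1))]
  rw [Finset.sum_range_succ]
  try ring

lemma rank_bij (s : Finset ℕ) (f : ℕ → ℤ)
    (hinj : ∀ q ∈ s, ∀ q' ∈ s, f q = f q' → q = q') (m : ℕ) (hm : m < s.card) :
    ∃! q, q ∈ s ∧ ((s.filter (fun q' => f q' < f q)).card = m) := by
  classical
  set rk : ℕ → ℕ := fun q => (s.filter (fun q' => f q' < f q)).card with hrk
  have hlt : ∀ q ∈ s, rk q < s.card := by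
    intro q hq
    have hsub : s.filter (fun q' => f q' < f q) ⊆ s.erase q := by
      intro x hx
      rw [Finset.mem_filter] at hx
      refine Finset.mem_erase.2 ⟨?_, hx.1⟩
      rintro rfl
      exact lt_irrefl _ hx.2
    calc rk q ≤ (s.erase q).card := Finset.card_le_card hsub
      _ < s.card := Finset.card_erase_lt_of_mem hq
  have hmono : ∀ q ∈ s, ∀ q' ∈ s, f q < f q' → rk q < rk q' := by
    intro q hq q' hq' hlt'
    apply Finset.card_lt_card
    rw [Finset.ssubset_def]
    constructor
    · intro x hx
      rw [Finset.mem_filter] at *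
      exact ⟨hx.1, hx.2.trans hlt'⟩
    · intro hsub
      have h1 : q ∈ s.filter (fun x => f x < f q') := Finset.mem_filter.2 ⟨hq, hlt'⟩
      have h2 := hsub h1
      rw [Finset.mem_filter] at h2
      exact lt_irrefl _ h2.2
  have hne : ∀ q ∈ s, ∀ q' ∈ s, q ≠ q' → rk q ≠ rk q' := by
    intro q hq q' hq' hne'
    have hf : f q ≠ f q' := fun h => hne' (hinj q hq q' hq' h)
    rcases hf.lt_or_gt with h | h
    · exact Nat.ne_of_lt (hmono q hq q' hq' h)
    · exact (Nat.ne_of_lt (hmono q' hq' q hq h)).symm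
  have hsurj := Finset.surj_on_of_inj_on_of_card_le (s := s) (t := Finset.range s.card)
      (fun a _ => rk a) (fun a ha => Finset.mem_range.2 (hlt a ha))
      (fun a₁ a₂ ha₁ ha₂ h => by
        by_contra hc
        exact hne a₁ ha₁ a₂ ha₂ hc h)
      (by simp)
  obtain ⟨q, hqs, hqe⟩ := hsurj m (Finset.mem_range.2 hm)
  refine ⟨q, ⟨hqs, hqe.symm⟩, ?_⟩
  rintro q' ⟨hq's, hq'm⟩
  by_contra hcc
  exact hne q' hq's q hqs hcc (hq'm.trans hqe)

lemma key_lt_iff_of_lt (A x y : ℤ) (i j : ℕ) (hij : i < j) (hj : (j:ℤ) < A) :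
    A*x + i < A*y + j ↔ x ≤ y := by
  have hA : 0 < A := by
    have : (0:ℤ) ≤ j := by positivity
    omega
  constructor
  · intro hlt
    by_contra hc
    push_neg at hc
    have h2 : A*(y+1) ≤ A*x := by
      apply mul_le_mul_of_nonneg_left (by omega) (le_of_lt hA)
    have h3 : (0:ℤ) ≤ i := by positivity
    nlinarith
  · intro hle
    have h2 : A*x ≤ A*y := mul_le_mul_of_nonneg_left hle (le_of_lt hA)
    have : (i:ℤ) < j := by exact_mod_cast hij
    omega

lemma key_lt_iff_of_gt (A x y : ℤ) (i j : ℕ) (hij : j < i) (hi : (i:ℤ) < A) :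
    A*x + i < A*y + j ↔ x < y := by
  have hA : 0 < A := by
    have : (0:ℤ) ≤ i := by positivity
    omega
  constructor
  · intro hlt
    by_contra hc
    push_neg at hc
    have h2 : A*y ≤ A*x := mul_le_mul_of_nonneg_left hc (le_of_lt hA)
    have : (j:ℤ) < i := by exact_mod_cast hij
    omega
  · intro hle
    have h2 : A*(x+1) ≤ A*y := mul_le_mul_of_nonneg_left (by omega) (le_of_lt hA)
    have h3 : (0:ℤ) ≤ j := by positivity
    nlinarith

/-- the key of a position: lexicographic (prefix height, position) encoded into ℤ. -/
noncomputable def keyf (v : List Bool) (i : ℕ) : ℤ :=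
  ((v.length : ℤ) + 1) * height (v.take i) + i

/-- The set of `D`-positions of `v`. -/
noncomputable def Dpos (v : List Bool) : Finset ℕ :=
  (range v.length).filter (fun i => v.getD i false = false)

lemma Dpos_card (v : List Bool) : (Dpos v).card = v.count false := by
  classical
  rw [Dpos]
  exact count_pos_eq false v

lemma keyf_inj (v : List Bool) : ∀ q ∈ Dpos v, ∀ q' ∈ Dpos v, keyf v q = keyf v q' → q = q' := by
  intro q hq q' hq' h
  rw [Dpos, Finset.mem_filter, Finset.mem_range] at hq hq'
  unfold keyf at h
  set A : ℤ := (v.length : ℤ) + 1 with hA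
  have h1 : A * (height (v.take q) - height (v.take q')) = (q' : ℤ) - q := by
    linear_combination h
  have hb : |(q' : ℤ) - (q:ℤ)| < A := by
    rw [abs_sub_lt_iff]
    constructor <;> (push_cast; omega)
  have heq : height (v.take q) = height (v.take q') := by
    by_contra hne
    have h2 : (1 : ℤ) ≤ |height (v.take q) - height (v.take q')| := Int.one_le_abs (sub_ne_zero.2 hne)
    have h4 : A ≤ |A * (height (v.take q) - height (v.take q'))| := by
      rw [abs_mul, abs_of_nonneg (by positivity : (0:ℤ) ≤ A)]
      calc A = A * 1 := by ring
        _ ≤ A * |height (v.take q) - height (v.take q')| := by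
            apply mul_le_mul_of_nonneg_left h2 (by positivity)
    rw [h1] at h4
    omega
  rw [heq] at h
  have : (q : ℤ) = q' := by omega
  exact_mod_cast this

/-- Main lemma: flaws of the rotation ending at the `D` in position `q` equals the
lexicographic rank of that `D`. -/
lemma flaws_rot_eq_rank (v : List Bool) (hh : height v = -1) (q : ℕ) (hq : q < v.length)
    (hvq : v.getD q false = false) :
    flaws (v.drop (q+1) ++ v.take q)
      = ((Dpos v).filter (fun q' => keyf v q' < keyf v q)).card := by
  classical
  set P := v.take q with hP
  set S := v.drop (q+1) with hSdef
  set c := height P with hc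
  have hlenP : P.length = q := by
    rw [hP, List.length_take]
    omega
  have hvdecomp : v = P ++ false :: S := by
    conv_lhs => rw [← List.take_append_drop q v]
    congr 1
    rw [List.drop_eq_getElem_cons hq]
    rw [← List.getD_eq_getElem v false hq, hvq]
  have hlenS : S.length = v.length - (q+1) := by rw [hSdef, List.length_drop]
  have hhS : height S = -c := by
    have h2 : height v = c + ((-1) + height S) := by
      conv_lhs => rw [hvdecomp]
      rw [height_append, height_cons]
      norm_num
      exact hc.symm
    rw [hh] at h2
    linarith
  -- LHS as cnt
  have hfl : (flaws (S ++ P) : ℤ) = (cnt true 0 S : ℤ) + (cnt true (-c) P : ℤ) := by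
    rw [flaws_eq, cnt_append]
    rw [show (0 : ℤ) + height S = -c from by rw [hhS]; ring]
    push_cast
    ring
  -- RHS as cnt: split the filter
  rw [Dpos, Finset.filter_filter]
  set pred : ℕ → Prop := fun i => v.getD i false = false ∧ keyf v i < keyf v q with hpred
  rw [show ((range v.length).filter pred).card
      = ((range q).filter pred).card + (if pred q then 1 else 0)
        + ((range (v.length - (q+1))).filter (fun i => pred (q+1+i))).card from
    card_filter_range_split v.length q hq pred]
  have hpredq : ¬ pred q := by
    rw [hpred]
    rintro ⟨-, hlt⟩
    exact lt_irrefl _ hlt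
  rw [if_neg hpredq]
  -- piece 1
  have hpiece1 : ((range q).filter pred).card = cnt false (-c-1) P := by
    rw [← cnt_eq false (-c-1) P, hlenP]
    congr 1
    apply Finset.filter_congr
    intro i hi
    rw [Finset.mem_range] at hi
    have e1 : v.getD i false = P.getD i false := by
      rw [List.getD_eq_getElem?_getD, List.getD_eq_getElem?_getD, hP,
        List.getElem?_take_of_lt hi]
    have e2 : v.take i = P.take i := by
      rw [hP, List.take_take, min_eq_left (le_of_lt hi)]
    have e3 : keyf v i < keyf v q ↔ height (v.take i) ≤ c := by
      unfold keyf
      rw [key_lt_iff_of_lt ((v.length : ℤ) + 1) _ _ i q hi (by push_cast; omega)]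
    rw [hpred]
    simp only [e1, e3, e2]
    constructor
    · rintro ⟨h1, h2⟩; exact ⟨h1, by omega⟩
    · rintro ⟨h1, h2⟩; exact ⟨h1, by omega⟩
  -- piece 3
  have hpiece3 : ((range (v.length - (q+1))).filter (fun i => pred (q+1+i))).card
      = cnt false (-1) S := by
    rw [← cnt_eq false (-1) S, hlenS]
    congr 1
    apply Finset.filter_congr
    intro i hi
    rw [Finset.mem_range] at hi
    have e1 : v.getD (q+1+i) false = S.getD i false := by
      rw [List.getD_eq_getElem?_getD, List.getD_eq_getElem?_getD, hSdef,
        List.getElem?_drop]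
    have e2 : v.take (q+1+i) = P ++ false :: S.take i := by
      conv_lhs => rw [hvdecomp]
      rw [List.take_append, List.take_of_length_le (by omega),
        hlenP, show q+1+i - q = i+1 from by omega, List.take_succ_cons]
    have e3 : height (v.take (q+1+i)) = c - 1 + height (S.take i) := by
      rw [e2, height_append, height_cons]
      push_cast
      ring
    have e4 : keyf v (q+1+i) < keyf v q ↔ height (v.take (q+1+i)) < c := by
      unfold keyf
      rw [key_lt_iff_of_gt ((v.length : ℤ) + 1) _ _ (q+1+i) q (by omega) (by push_cast; omega)]
    rw [hpred]
    simp only [e1, e4, e3]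
    constructor
    · rintro ⟨h1, h2⟩; exact ⟨h1, by omega⟩
    · rintro ⟨h1, h2⟩; exact ⟨h1, by omega⟩
  rw [hpiece1, hpiece3]
  -- now use L1 on both pieces
  have l1P := L1 P (-c)
  have l1S := L1 S 0
  rw [show -c + height P = (0:ℤ) from by rw [← hc]; ring] at l1P
  rw [show (0:ℤ) + height S = -c from by rw [hhS]; ring] at l1S
  rw [show (0:ℤ) - 1 = -1 from by ring] at l1S
  rw [show (-c) - 1 = -c-1 from rfl] at l1P
  have : (flaws (S ++ P) : ℤ) = (cnt false (-c-1) P : ℤ) + (cnt false (-1) S : ℤ) := by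
    rw [hfl]
    omega
  omega


/-- cyclic double-ascent statistic -/
def gcy (v : List Bool) : ℕ :=
  das v + (if v.head? = some true ∧ v.getLast? = some true then 1 else 0)

lemma if_and_comm (X Y : Prop) [Decidable (X ∧ Y)] [Decidable (Y ∧ X)] :
    (if X ∧ Y then (1:ℕ) else 0) = (if Y ∧ X then 1 else 0) :=
  if_congr and_comm rfl rfl

lemma gcy_rotate_one (a : Bool) (t : List Bool) : gcy (t ++ [a]) = gcy (a :: t) := by
  rcases t with _ | ⟨b, t'⟩
  · simp [gcy]
  · have hne : (b :: t') ≠ [] := by simp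
    unfold gcy
    rw [das_append, List.head?_append_of_ne_nil _ hne,
      show das (a :: b :: t') = (if a = true ∧ (b :: t').head? = some true then 1 else 0)
        + das (b :: t') from rfl]
    have h1 : ((b :: t') ++ [a]).getLast? = some a := List.getLast?_concat
    have h2 : (a :: b :: t').getLast? = (b :: t').getLast? := List.getLast?_cons_cons
    have h3 : (a :: b :: t').head? = some a := rfl
    rw [h1, h2, h3]
    have e1 : ((b :: t').getLast? = some true ∧ ([a] : List Bool).head? = some true)
        ↔ ((b :: t').getLast? = some true ∧ a = true) := by simp
    have e2 : ((b :: t').head? = some true ∧ some a = some true)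
        ↔ ((b :: t').head? = some true ∧ a = true) := by simp
    have e3 : ((some a : Option Bool) = some true ∧ (b :: t').getLast? = some true)
        ↔ (a = true ∧ (b :: t').getLast? = some true) := by simp
    rw [if_congr e1 rfl rfl, if_congr e2 rfl rfl, if_congr e3 rfl rfl,
      if_and_comm ((b :: t').getLast? = some true) (a = true)]
    have h4 : das [a] = 0 := by simp [das]
    rw [h4, if_and_comm ((b :: t').head? = some true) (a = true)]
    ring

lemma gcy_rotate (j : ℕ) : ∀ (v : List Bool), gcy (v.rotate j) = gcy v := by
  induction j with
  | zero => intro v; rw [List.rotate_zero]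
  | succ j ih =>
    intro v
    rcases v with _ | ⟨a, t⟩
    · simp
    · rw [List.rotate_cons_succ, ih (t ++ [a]), gcy_rotate_one]

lemma gcy_concat_false (y : List Bool) : gcy (y ++ [false]) = das y := by
  unfold gcy
  rw [das_append, List.getLast?_concat]
  simp [das]

lemma count_true_add_count_false (l : List Bool) : l.count true + l.count false = l.length := by
  induction l with
  | nil => simp
  | cons a t ih => rcases a <;> simp [List.count_cons] <;> omega

lemma rot_symm {α : Type*} (u x : List α) (j : ℕ) (h : x = u.rotate j) :
    ∃ j2, u = x.rotate j2 := by
  by_cases hu : u.length = 0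
  · have : u = [] := List.length_eq_zero_iff.mp hu
    subst this
    simp at h
    exact ⟨0, by simp [h]⟩
  · refine ⟨u.length - j % u.length, ?_⟩
    rw [h, List.rotate_rotate]
    have h1 : j % u.length < u.length := Nat.mod_lt _ (by omega)
    have h2 := Nat.div_add_mod j u.length
    rw [show j + (u.length - j % u.length) = u.length * (j / u.length) + u.length from by omega,
      ← Nat.mul_succ]
    exact (List.rotate_length_mul u (j / u.length + 1)).symm

/-- The central rotation lemma: every balanced word can be uniquely "re-rotated" to have any
prescribed number of flaws, preserving the `das` statistic. -/
lemma exists_rot (n m' : ℕ) (hm' : m' ≤ n) (w : List Bool)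
    (hT : w.count true = n) (hF : w.count false = n) :
    ∃ w' : List Bool, (∃ j, w' ++ [false] = (w ++ [false]).rotate j) ∧ flaws w' = m' ∧
      w'.count true = n ∧ w'.count false = n ∧ das w' = das w ∧
      (∀ x, (∃ j, x ++ [false] = (w ++ [false]).rotate j) → flaws x = m' → x = w') := by
  classical
  set v := w ++ [false] with hv
  have hvT : v.count true = n := by rw [hv, List.count_append]; simp [hT]
  have hvF : v.count false = n + 1 := by rw [hv, List.count_append]; simp [hF]
  have hvlen : v.length = 2*n + 1 := by
    have := count_true_add_count_false v
    omega
  have hvh : height v = -1 := by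
    unfold height
    rw [hvT, hvF]
    push_cast
    ring
  have hcard : (Dpos v).card = n+1 := by rw [Dpos_card, hvF]
  obtain ⟨q, ⟨hqmem, hqrank⟩, huniq⟩ :=
    rank_bij (Dpos v) (keyf v) (keyf_inj v) m' (by omega)
  have hqmem' := hqmem
  rw [Dpos, Finset.mem_filter, Finset.mem_range] at hqmem'
  obtain ⟨hq1, hq2⟩ := hqmem'
  set w' := v.drop (q+1) ++ v.take q with hw'
  have hgetq : v[q]? = some false := by
    rw [List.getElem?_eq_getElem hq1]
    rw [← List.getD_eq_getElem v false hq1, hq2]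
  have htake : v.take (q+1) = v.take q ++ [false] := by
    rw [List.take_succ, hgetq]
    rfl
  -- generic: the word at a D-position q' is a rotation
  have hrotgen : ∀ q', q' < v.length → v.getD q' false = false →
      (v.drop (q'+1) ++ v.take q') ++ [false] = v.rotate (q'+1) := by
    intro q' hq1' hq2'
    have hget : v[q']? = some false := by
      rw [List.getElem?_eq_getElem hq1']
      rw [← List.getD_eq_getElem v false hq1', hq2']
    rw [List.rotate_eq_drop_append_take (by omega), List.take_succ, hget]
    show _ = v.drop (q'+1) ++ (v.take q' ++ [false])
    rw [List.append_assoc]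
  have hrot : w' ++ [false] = v.rotate (q+1) := hrotgen q hq1 hq2
  -- flaws
  have hflaws : flaws w' = m' := by
    rw [hw', flaws_rot_eq_rank v hvh q hq1 hq2]
    exact hqrank
  -- counts
  have hdecomp : v = v.take q ++ false :: v.drop (q+1) := by
    conv_lhs => rw [← List.take_append_drop q v]
    congr 1
    rw [List.drop_eq_getElem_cons hq1]
    rw [← List.getD_eq_getElem v false hq1, hq2]
  have hcount : ∀ b : Bool, w'.count b = v.count b - List.count b [false] := by
    intro b
    have : v.count b = (v.take q).count b + List.count b [false] + (v.drop (q+1)).count b := by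
      conv_lhs => rw [hdecomp]
      rw [List.count_append]
      rcases b <;> simp [List.count_cons] <;> ring
    rw [hw', List.count_append]
    omega
  have hcT : w'.count true = n := by rw [hcount true]; simp [hvT]
  have hcF : w'.count false = n := by rw [hcount false]; simp [hvF]
  -- das
  have hdas : das w' = das w := by
    have h1 : das w' = gcy (w' ++ [false]) := (gcy_concat_false w').symm
    rw [h1, hrot, gcy_rotate, hv]
    exact gcy_concat_false w
  refine ⟨w', ⟨q+1, hrot⟩, hflaws, hcT, hcF, hdas, ?_⟩
  -- uniqueness
  rintro x ⟨j, hj⟩ hfx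
  have hvne : v.length ≠ 0 := by omega
  have hj' : x ++ [false] = v.rotate (j % v.length) := by rw [List.rotate_mod]; exact hj
  -- find the D-position for x
  have hxq : ∃ q'', q'' < v.length ∧ v.getD q'' false = false ∧
      x = v.drop (q''+1) ++ v.take q'' := by
    by_cases hj0 : j % v.length = 0
    · refine ⟨v.length - 1, by omega, ?_, ?_⟩
      · rw [List.getD_eq_getElem?_getD, hv, show v.length - 1 = w.length from by
          rw [hv]; simp]
        rw [List.getElem?_append_right (le_refl _)]
        simp
      · rw [hj0, List.rotate_zero] at hj'
        have hx : x = w := by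
          have := congrArg List.dropLast hj'
          rw [List.dropLast_concat, hv, List.dropLast_concat] at this
          exact this
        rw [hx, show v.length - 1 + 1 = v.length from by omega, List.drop_length]
        rw [show v.length - 1 = w.length from by rw [hv]; simp]
        rw [hv, List.take_left]
        simp
    · set q'' := j % v.length - 1 with hq''
      have hjlt : j % v.length < v.length := Nat.mod_lt _ (by omega)
      have hq''lt : q'' < v.length := by omega
      have hrw : v.rotate (j % v.length) = v.drop (q''+1) ++ v.take (q''+1) := by
        rw [List.rotate_eq_drop_append_take (by omega), show q'' + 1 = j % v.length from by omega]
      rw [hrw, List.take_succ] at hj'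
      have hget : v[q'']? = some (v[q''] ) := List.getElem?_eq_getElem hq''lt
      rw [hget] at hj'
      have hj'' : x ++ [false] = (v.drop (q''+1) ++ v.take q'') ++ [v[q'']] := by
        rw [hj']
        simp [List.append_assoc]
      have hlast := congrArg List.getLast? hj''
      rw [List.getLast?_concat, List.getLast?_concat] at hlast
      have hvq'' : v[q''] = false := by
        have := Option.some.inj hlast
        exact this.symm
      refine ⟨q'', hq''lt, ?_, ?_⟩
      · rw [List.getD_eq_getElem v false hq''lt, hvq'']
      · have := congrArg List.dropLast hj''
        rw [List.dropLast_concat, List.dropLast_concat] at this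
        exact this
  obtain ⟨q'', hq''lt, hq''D, hxeq⟩ := hxq
  have hq''mem : q'' ∈ Dpos v := by
    rw [Dpos, Finset.mem_filter, Finset.mem_range]
    exact ⟨hq''lt, hq''D⟩
  have hrank'' : ((Dpos v).filter (fun q' => keyf v q' < keyf v q'')).card = m' := by
    rw [← flaws_rot_eq_rank v hvh q'' hq''lt hq''D, ← hxeq, hfx]
  have : q'' = q := huniq q'' ⟨hq''mem, hrank''⟩
  rw [hxeq, this, ← hw']


lemma isDyck_iff (n : ℕ) (l : List Bool) :
    IsDyck n l ↔ (l.count true = n ∧ l.count false = n) := by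
  unfold IsDyck
  have := count_true_add_count_false l
  constructor
  · rintro ⟨h1, h2⟩; exact ⟨h2, by omega⟩
  · rintro ⟨h1, h2⟩; exact ⟨by omega, h1⟩

/-- transport a word to a given flaw count by re-rotation -/
noncomputable def rotFun (n t : ℕ) (l : List Bool) : List Bool :=
  if h : t ≤ n ∧ l.count true = n ∧ l.count false = n then
    Classical.choose (exists_rot n t h.1 l h.2.1 h.2.2)
  else l

lemma rotFun_spec (n t : ℕ) (ht : t ≤ n) (l : List Bool)
    (hT : l.count true = n) (hF : l.count false = n) :
    (∃ j, rotFun n t l ++ [false] = (l ++ [false]).rotate j) ∧ flaws (rotFun n t l) = t ∧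
      (rotFun n t l).count true = n ∧ (rotFun n t l).count false = n ∧
      das (rotFun n t l) = das l ∧
      (∀ x, (∃ j, x ++ [false] = (l ++ [false]).rotate j) → flaws x = t → x = rotFun n t l) := by
  unfold rotFun
  rw [dif_pos ⟨ht, hT, hF⟩]
  exact Classical.choose_spec (exists_rot n t ht l hT hF)

lemma rotFun_inverse (n t s : ℕ) (ht : t ≤ n) (hs : s ≤ n) (l : List Bool)
    (hT : l.count true = n) (hF : l.count false = n) (hfl : flaws l = s) :
    rotFun n s (rotFun n t l) = l := by
  obtain ⟨⟨j, hj⟩, hfl', hT', hF', -, -⟩ := rotFun_spec n t ht l hT hF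
  obtain ⟨-, -, -, -, -, huniq⟩ := rotFun_spec n s hs (rotFun n t l) hT' hF'
  have hsym : ∃ j2, l ++ [false] = (rotFun n t l ++ [false]).rotate j2 := by
    obtain ⟨j2, hj2⟩ := rot_symm (l ++ [false]) (rotFun n t l ++ [false]) j hj
    exact ⟨j2, hj2⟩
  exact (huniq l hsym hfl).symm

lemma card_rot (n k m m' : ℕ) (hm : m ≤ n) (hm' : m' ≤ n) :
    Nat.card {l : List Bool // (l.count true = n ∧ l.count false = n) ∧ flaws l = m ∧ das l = k}
      = Nat.card {l : List Bool //
          (l.count true = n ∧ l.count false = n) ∧ flaws l = m' ∧ das l = k} := by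
  apply Nat.card_congr
  refine ⟨fun x => ⟨rotFun n m' x.1, ?_⟩, fun y => ⟨rotFun n m y.1, ?_⟩, ?_, ?_⟩
  · obtain ⟨⟨hT, hF⟩, hfl, hdas⟩ := x.2
    obtain ⟨-, h2, h3, h4, h5, -⟩ := rotFun_spec n m' hm' x.1 hT hF
    exact ⟨⟨h3, h4⟩, h2, by rw [h5, hdas]⟩
  · obtain ⟨⟨hT, hF⟩, hfl, hdas⟩ := y.2
    obtain ⟨-, h2, h3, h4, h5, -⟩ := rotFun_spec n m hm y.1 hT hF
    exact ⟨⟨h3, h4⟩, h2, by rw [h5, hdas]⟩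
  · rintro ⟨l, ⟨hT, hF⟩, hfl, hdas⟩
    exact Subtype.ext (rotFun_inverse n m' m hm' hm l hT hF hfl)
  · rintro ⟨l, ⟨hT, hF⟩, hfl, hdas⟩
    exact Subtype.ext (rotFun_inverse n m m' hm hm' l hT hF hfl)


section Counting

lemma finite_pred (L : ℕ) (P : List Bool → Prop) (hP : ∀ l, P l → l.length = L) :
    Finite {l : List Bool // P l} := by
  apply Finite.of_injective (fun x : {l // P l} => (fun i : Fin L => x.1.getD i false))
  rintro ⟨x, hx⟩ ⟨y, hy⟩ hxy
  simp only at hxy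
  apply Subtype.ext
  apply List.ext_getElem (by rw [hP x hx, hP y hy])
  intro i h1 h2
  have := congrFun hxy ⟨i, by rw [← hP x hx]; exact h1⟩
  simp only at this
  rw [← List.getD_eq_getElem x false h1, ← List.getD_eq_getElem y false h2]
  exact this

lemma card_split (P Q : List Bool → Prop) (L : ℕ) (hP : ∀ l, P l → l.length = L) :
    Nat.card {l : List Bool // P l}
      = Nat.card {l : List Bool // P l ∧ Q l} + Nat.card {l : List Bool // P l ∧ ¬ Q l} := by
  classical
  haveI h1 : Finite {l : List Bool // P l} := finite_pred L P hP
  haveI h2 : Finite {l : List Bool // P l ∧ Q l} := finite_pred L _ (fun l h => hP l h.1)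
  haveI h3 : Finite {l : List Bool // P l ∧ ¬ Q l} := finite_pred L _ (fun l h => hP l h.1)
  rw [← Nat.card_sum]
  apply Nat.card_congr
  refine ⟨fun x => if h : Q x.1 then Sum.inl ⟨x.1, x.2, h⟩ else Sum.inr ⟨x.1, x.2, h⟩,
    Sum.elim (fun y => ⟨y.1, y.2.1⟩) (fun y => ⟨y.1, y.2.1⟩), ?_, ?_⟩
  · rintro ⟨l, hl⟩
    by_cases h : Q l
    · dsimp only
      rw [dif_pos h]
      rfl
    · dsimp only
      rw [dif_neg h]
      rfl
  · rintro (⟨l, hl, hQ⟩ | ⟨l, hl, hQ⟩)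
    · simp only [Sum.elim_inl]
      exact dif_pos hQ
    · simp only [Sum.elim_inr]
      exact dif_neg hQ

lemma card_cons (b : Bool) (C : List Bool → Prop) :
    Nat.card {l : List Bool // C l ∧ l.head? = some b}
      = Nat.card {t : List Bool // C (b :: t)} := by
  apply Nat.card_congr
  refine ⟨fun x => ⟨x.1.tail, ?_⟩, fun t => ⟨b :: t.1, t.2, rfl⟩, ?_, ?_⟩
  · obtain ⟨hC, hh⟩ := x.2
    rcases hx : x.1 with _ | ⟨a, t⟩
    · rw [hx] at hh; simp at hh
    · rw [hx] at hh
      simp only [List.head?_cons, Option.some.injEq] at hh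
      rw [hx] at hC
      simp only [List.tail_cons]
      rw [hh] at hC
      exact hC
  · rintro ⟨l, hC, hh⟩
    apply Subtype.ext
    rcases l with _ | ⟨a, t⟩
    · simp at hh
    · simp only [List.head?_cons, Option.some.injEq] at hh
      simp [hh]
  · rintro ⟨t, ht⟩
    apply Subtype.ext
    rfl

/-- the master predicate -/
def CP (p q j : ℕ) (l : List Bool) : Prop :=
  l.count true = p ∧ l.count false = q ∧ das l = j

lemma CP_len (p q j : ℕ) : ∀ l, CP p q j l → l.length = p + q := by
  rintro l ⟨h1, h2, h3⟩
  have := count_true_add_count_false l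
  omega

noncomputable def QT (p q j : ℕ) : ℕ :=
  Nat.card {l : List Bool // CP p q j l ∧ l.head? = some true}

noncomputable def QF (p q j : ℕ) : ℕ :=
  Nat.card {l : List Bool // CP p q j l ∧ l.head? = some false}

lemma head_ne_nil : ∀ l : List Bool, l.head? ≠ some true → l.head? ≠ some false → l = [] := by
  intro l h1 h2
  rcases l with _ | ⟨a, t⟩
  · rfl
  · rcases a
    · exact absurd rfl h2
    · exact absurd rfl h1

lemma card_nil_piece (p q j : ℕ) :
    Nat.card {l : List Bool //
        CP p q j l ∧ ¬ l.head? = some true ∧ ¬ l.head? = some false}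
      = if p = 0 ∧ q = 0 ∧ j = 0 then 1 else 0 := by
  split_ifs with hc
  · obtain ⟨hp, hq, hj⟩ := hc
    haveI : Unique {l : List Bool //
        CP p q j l ∧ ¬ l.head? = some true ∧ ¬ l.head? = some false} := by
      refine ⟨⟨⟨[], ⟨?_, ?_, ?_⟩, by simp, by simp⟩⟩, ?_⟩
      · simp [hp]
      · simp [hq]
      · simp [das, hj]
      · rintro ⟨l, hl, h1, h2⟩
        apply Subtype.ext
        exact head_ne_nil l h1 h2
    exact Nat.card_unique
  · haveI : IsEmpty {l : List Bool //
        CP p q j l ∧ ¬ l.head? = some true ∧ ¬ l.head? = some false} := by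
      refine ⟨?_⟩
      rintro ⟨l, ⟨h1, h2, h3⟩, h4, h5⟩
      have hnil := head_ne_nil l h4 h5
      subst hnil
      simp [das] at h1 h2 h3
      exact hc ⟨h1.symm, h2.symm, h3.symm⟩
    exact Nat.card_of_isEmpty

lemma card_three_split (P : List Bool → Prop) (L : ℕ) (hP : ∀ l, P l → l.length = L) :
    Nat.card {l : List Bool // P l}
      = Nat.card {l : List Bool // P l ∧ l.head? = some true}
        + Nat.card {l : List Bool // P l ∧ l.head? = some false}
        + Nat.card {l : List Bool // P l ∧ ¬ l.head? = some true ∧ ¬ l.head? = some false} := by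
  rw [card_split P (fun l => l.head? = some true) L hP]
  rw [card_split (fun l => P l ∧ ¬ l.head? = some true) (fun l => l.head? = some false) L
    (fun l h => hP l h.1)]
  have e1 : Nat.card {l : List Bool // (P l ∧ ¬ l.head? = some true) ∧ l.head? = some false}
      = Nat.card {l : List Bool // P l ∧ l.head? = some false} := by
    apply Nat.card_congr
    apply Equiv.subtypeEquivRight
    intro l
    constructor
    · rintro ⟨⟨h1, h2⟩, h3⟩; exact ⟨h1, h3⟩
    · rintro ⟨h1, h3⟩
      refine ⟨⟨h1, ?_⟩, h3⟩
      rw [h3]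
      simp
  have e2 : Nat.card {l : List Bool // (P l ∧ ¬ l.head? = some true) ∧ ¬ l.head? = some false}
      = Nat.card {l : List Bool // P l ∧ ¬ l.head? = some true ∧ ¬ l.head? = some false} := by
    apply Nat.card_congr
    apply Equiv.subtypeEquivRight
    intro l
    constructor
    · rintro ⟨⟨h1, h2⟩, h3⟩; exact ⟨h1, h2, h3⟩
    · rintro ⟨h1, h2, h3⟩; exact ⟨⟨h1, h2⟩, h3⟩
  rw [e1, e2]
  ring

lemma QT_zero (q j : ℕ) : QT 0 q j = 0 := by
  haveI : IsEmpty {l : List Bool // CP 0 q j l ∧ l.head? = some true} := by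
    refine ⟨?_⟩
    rintro ⟨l, ⟨h1, h2, h3⟩, h4⟩
    rcases l with _ | ⟨a, t⟩
    · simp at h4
    · simp only [List.head?_cons, Option.some.injEq] at h4
      subst h4
      simp [List.count_cons] at h1
  exact Nat.card_of_isEmpty

lemma QF_zero (p j : ℕ) : QF p 0 j = 0 := by
  haveI : IsEmpty {l : List Bool // CP p 0 j l ∧ l.head? = some false} := by
    refine ⟨?_⟩
    rintro ⟨l, ⟨h1, h2, h3⟩, h4⟩
    rcases l with _ | ⟨a, t⟩
    · simp at h4
    · simp only [List.head?_cons, Option.some.injEq] at h4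
      subst h4
      simp [List.count_cons] at h2
  exact Nat.card_of_isEmpty

lemma das_cons_true (t : List Bool) :
    das (true :: t) = (if t.head? = some true then 1 else 0) + das t := by
  show (if true = true ∧ t.head? = some true then 1 else 0) + das t = _
  congr 1
  exact if_congr (by simp) rfl rfl

lemma das_cons_false (t : List Bool) : das (false :: t) = das t := by
  show (if false = true ∧ t.head? = some true then 1 else 0) + das t = _
  simp

/-- intermediate predicate after stripping a leading `true` -/
def DT (p q j : ℕ) (t : List Bool) : Prop :=
  t.count true = p ∧ t.count false = q ∧ (if t.head? = some true then 1 else 0) + das t = j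

lemma DT_len (p q j : ℕ) : ∀ l, DT p q j l → l.length = p + q := by
  rintro l ⟨h1, h2, h3⟩
  have := count_true_add_count_false l
  omega

lemma QT_split (p q j : ℕ) :
    QT (p+1) q j
      = Nat.card {t : List Bool // DT p q j t ∧ t.head? = some true}
        + Nat.card {t : List Bool // DT p q j t ∧ t.head? = some false}
        + (if p = 0 ∧ q = 0 ∧ j = 0 then 1 else 0) := by
  unfold QT
  rw [card_cons true (CP (p+1) q j)]
  have e : ∀ t : List Bool, CP (p+1) q j (true :: t) ↔ DT p q j t := by
    intro t
    unfold CP DT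
    rw [das_cons_true]
    have ea : (true :: t).count true = t.count true + 1 := by simp
    have eb : (true :: t).count false = t.count false := by simp
    rw [ea, eb]
    constructor
    · rintro ⟨h1, h2, h3⟩
      refine ⟨by omega, by omega, h3⟩
    · rintro ⟨h1, h2, h3⟩
      refine ⟨by omega, by omega, h3⟩
  rw [Nat.card_congr (Equiv.subtypeEquivRight e)]
  rw [card_three_split (DT p q j) (p+q) (DT_len p q j)]
  congr 1
  -- last piece equals the nil piece
  have e2 : ∀ t : List Bool,
      (DT p q j t ∧ ¬ t.head? = some true ∧ ¬ t.head? = some false)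
        ↔ (CP p q j t ∧ ¬ t.head? = some true ∧ ¬ t.head? = some false) := by
    intro t
    constructor
    · rintro ⟨⟨h1, h2, h3⟩, h4, h5⟩
      rw [if_neg h4] at h3
      exact ⟨⟨h1, h2, by omega⟩, h4, h5⟩
    · rintro ⟨⟨h1, h2, h3⟩, h4, h5⟩
      refine ⟨⟨h1, h2, ?_⟩, h4, h5⟩
      rw [if_neg h4]
      omega
  rw [Nat.card_congr (Equiv.subtypeEquivRight e2)]
  exact card_nil_piece p q j

lemma QT_rec0 (p q : ℕ) : QT (p+1) q 0 = QF p q 0 + (if p = 0 ∧ q = 0 then 1 else 0) := by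
  rw [QT_split]
  have e1 : Nat.card {t : List Bool // DT p q 0 t ∧ t.head? = some true} = 0 := by
    haveI : IsEmpty {t : List Bool // DT p q 0 t ∧ t.head? = some true} := by
      refine ⟨?_⟩
      rintro ⟨t, ⟨h1, h2, h3⟩, h4⟩
      rw [if_pos h4] at h3
      omega
    exact Nat.card_of_isEmpty
  have e2 : Nat.card {t : List Bool // DT p q 0 t ∧ t.head? = some false} = QF p q 0 := by
    unfold QF
    apply Nat.card_congr
    apply Equiv.subtypeEquivRight
    intro t
    unfold DT CP
    constructor
    · rintro ⟨⟨h1, h2, h3⟩, h4⟩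
      rw [if_neg (by rw [h4]; simp)] at h3
      exact ⟨⟨h1, h2, by omega⟩, h4⟩
    · rintro ⟨⟨h1, h2, h3⟩, h4⟩
      refine ⟨⟨h1, h2, ?_⟩, h4⟩
      rw [if_neg (by rw [h4]; simp)]
      omega
  rw [e1, e2]
  have : (if p = 0 ∧ q = 0 ∧ (0:ℕ) = 0 then 1 else 0) = (if p = 0 ∧ q = 0 then 1 else 0) := by
    exact if_congr (by tauto) rfl rfl
  omega

lemma QT_recS (p q j : ℕ) : QT (p+1) q (j+1) = QT p q j + QF p q (j+1) := by
  rw [QT_split]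
  have e1 : Nat.card {t : List Bool // DT p q (j+1) t ∧ t.head? = some true} = QT p q j := by
    unfold QT
    apply Nat.card_congr
    apply Equiv.subtypeEquivRight
    intro t
    unfold DT CP
    constructor
    · rintro ⟨⟨h1, h2, h3⟩, h4⟩
      rw [if_pos h4] at h3
      exact ⟨⟨h1, h2, by omega⟩, h4⟩
    · rintro ⟨⟨h1, h2, h3⟩, h4⟩
      refine ⟨⟨h1, h2, ?_⟩, h4⟩
      rw [if_pos h4]
      omega
  have e2 : Nat.card {t : List Bool // DT p q (j+1) t ∧ t.head? = some false}
      = QF p q (j+1) := by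
    unfold QF
    apply Nat.card_congr
    apply Equiv.subtypeEquivRight
    intro t
    unfold DT CP
    constructor
    · rintro ⟨⟨h1, h2, h3⟩, h4⟩
      rw [if_neg (by rw [h4]; simp)] at h3
      exact ⟨⟨h1, h2, by omega⟩, h4⟩
    · rintro ⟨⟨h1, h2, h3⟩, h4⟩
      refine ⟨⟨h1, h2, ?_⟩, h4⟩
      rw [if_neg (by rw [h4]; simp)]
      omega
  rw [e1, e2]
  simp

lemma QF_rec (p q j : ℕ) :
    QF p (q+1) j = QT p q j + QF p q j + (if p = 0 ∧ q = 0 ∧ j = 0 then 1 else 0) := by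
  unfold QF
  rw [card_cons false (CP p (q+1) j)]
  have e : ∀ t : List Bool, CP p (q+1) j (false :: t) ↔ CP p q j t := by
    intro t
    unfold CP
    rw [das_cons_false]
    have ea : (false :: t).count true = t.count true := by simp
    have eb : (false :: t).count false = t.count false + 1 := by simp
    rw [ea, eb]
    constructor
    · rintro ⟨h1, h2, h3⟩
      exact ⟨by omega, by omega, h3⟩
    · rintro ⟨h1, h2, h3⟩
      exact ⟨by omega, by omega, h3⟩
  rw [Nat.card_congr (Equiv.subtypeEquivRight e)]
  rw [card_three_split (CP p q j) (p+q) (CP_len p q j)]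
  rw [card_nil_piece p q j]
  rfl

end Counting


def cfT (p q j : ℕ) : ℕ := if p = 0 then 0 else Nat.choose (p-1) j * Nat.choose q (p-j-1)
def cfF (p q j : ℕ) : ℕ := if q = 0 then 0 else Nat.choose (p-1) j * Nat.choose q (p-j)

lemma cfT_rec0 (p q : ℕ) : cfT (p+1) q 0 = cfF p q 0 + (if p = 0 ∧ q = 0 then 1 else 0) := by
  rcases p with _ | p'
  · by_cases hq : q = 0 <;> simp [cfT, cfF, hq]
  · by_cases hq : q = 0
    · subst hq
      unfold cfT cfF
      rw [if_neg (Nat.succ_ne_zero _), if_pos rfl,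
        if_neg (show ¬((p'+1:ℕ) = 0 ∧ (0:ℕ) = 0) from by omega)]
      rw [show p'+1+1-1 = p'+1 from by omega, show p'+1+1-0-1 = p'+1 from by omega]
      rw [Nat.choose_zero_succ]
      simp
    · unfold cfT cfF
      rw [if_neg (Nat.succ_ne_zero _), if_neg hq,
        if_neg (show ¬((p'+1:ℕ) = 0 ∧ q = 0) from by tauto)]
      rw [show p'+1+1-1 = p'+1 from by omega, show p'+1+1-0-1 = p'+1 from by omega,
        show p'+1-1 = p' from by omega, show p'+1-0 = p'+1 from by omega]
      rw [Nat.choose_zero_right, Nat.choose_zero_right]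
      simp

lemma cfT_recS (p q j : ℕ) : cfT (p+1) q (j+1) = cfT p q j + cfF p q (j+1) := by
  rcases p with _ | p'
  · by_cases hq : q = 0 <;> simp [cfT, cfF, hq]
  · by_cases hq : q = 0
    · subst hq
      simp only [cfT, cfF, if_neg (Nat.succ_ne_zero _), if_pos rfl, add_zero]
      rw [show p'+1+1 - (j+1) - 1 = p' - j from by omega,
        show p'+1 - j - 1 = p' - j from by omega,
        show p'+1+1-1 = p'+1 from by omega, show p'+1-1 = p' from by omega]
      by_cases hpj : p' - j = 0
      · rw [hpj]
        by_cases hle : j ≤ p'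
        · have hjp : j = p' := by omega
          subst hjp
          rw [Nat.choose_succ_succ, Nat.choose_eq_zero_of_lt (by omega : j < j + 1)]
          simp
        · rw [Nat.choose_eq_zero_of_lt (by omega : p' < j),
            Nat.choose_eq_zero_of_lt (by omega : p'+1 < j+1)]
          simp
      · obtain ⟨r, hr⟩ : ∃ r, p' - j = r + 1 := ⟨p' - j - 1, by omega⟩
        rw [hr]
        rw [show Nat.choose 0 (r+1) = 0 from Nat.choose_eq_zero_of_lt (by omega)]
        simp
    · simp only [cfT, cfF, if_neg (Nat.succ_ne_zero _), if_neg hq]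
      rw [show p'+1+1 - (j+1) - 1 = p' - j from by omega,
        show p'+1 - j - 1 = p' - j from by omega,
        show p'+1 - (j+1) = p' - j from by omega,
        show p'+1+1-1 = p'+1 from by omega, show p'+1-1 = p' from by omega]
      rw [Nat.choose_succ_succ]
      ring

lemma cfF_rec (p q j : ℕ) :
    cfF p (q+1) j = cfT p q j + cfF p q j + (if p = 0 ∧ q = 0 ∧ j = 0 then 1 else 0) := by
  rcases p with _ | p'
  · rcases j with _ | j' <;> by_cases hq : q = 0 <;> simp [cfT, cfF, hq]
  · rcases q with _ | q'
    · have e0 : (if ((p'+1:ℕ) = 0 ∧ (0:ℕ) = 0 ∧ j = 0) then (1:ℕ) else 0) = 0 := by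
        rw [if_neg (show ¬((p'+1:ℕ) = 0 ∧ (0:ℕ) = 0 ∧ j = 0) from by omega)]
      rw [e0, add_zero]
      unfold cfT cfF
      rw [if_neg (show ¬((0:ℕ)+1 = 0) from by omega), if_pos rfl,
        if_neg (Nat.succ_ne_zero p'), add_zero]
      rw [show p'+1-1 = p' from by omega, show p'+1 - j - 1 = p' - j from by omega,
        show ((0:ℕ)+1) = 1 from rfl]
      by_cases hj : p' < j
      · rw [Nat.choose_eq_zero_of_lt hj]
        simp
      · by_cases hj2 : j = p'
        · subst hj2
          rw [show j+1-j = 1 from by omega, show j-j = 0 from by omega]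
          simp
        · have h1 : 1 < p'+1-j := by omega
          have h2 : 0 < p'-j := by omega
          rw [Nat.choose_eq_zero_of_lt h1]
          obtain ⟨r, hr⟩ : ∃ r, p' - j = r + 1 := ⟨p' - j - 1, by omega⟩
          rw [hr, show Nat.choose 0 (r+1) = 0 from Nat.choose_eq_zero_of_lt (by omega)]
    · have e0 : (if ((p'+1:ℕ) = 0 ∧ (q'+1:ℕ) = 0 ∧ j = 0) then (1:ℕ) else 0) = 0 := by
        rw [if_neg (show ¬((p'+1:ℕ) = 0 ∧ (q'+1:ℕ) = 0 ∧ j = 0) from by omega)]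
      rw [e0, add_zero]
      unfold cfT cfF
      rw [if_neg (show ¬((q'+1:ℕ)+1 = 0) from by omega), if_neg (Nat.succ_ne_zero q'),
        if_neg (Nat.succ_ne_zero p')]
      rw [show p'+1-1 = p' from by omega, show p'+1 - j - 1 = p' - j from by omega]
      by_cases hj : p'+1-j = 0
      · rw [Nat.choose_eq_zero_of_lt (show p' < j from by omega)]
        simp
      · obtain ⟨r, hr⟩ : ∃ r, p'+1-j = r + 1 := ⟨p'+1-j-1, by omega⟩
        rw [hr, show p' - j = r from by omega, Nat.choose_succ_succ]
        ring

lemma QTF_closed : ∀ s p q j, p + q ≤ s → QT p q j = cfT p q j ∧ QF p q j = cfF p q j := by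
  intro s
  induction s with
  | zero =>
    intro p q j h
    have hp : p = 0 := by omega
    have hq : q = 0 := by omega
    subst hp; subst hq
    constructor
    · rw [QT_zero]; simp [cfT]
    · rw [QF_zero]; simp [cfF]
  | succ s ih =>
    intro p q j h
    constructor
    · rcases p with _ | p'
      · rw [QT_zero]; simp [cfT]
      · rcases j with _ | j'
        · rw [QT_rec0, (ih p' q 0 (by omega)).2, cfT_rec0]
        · rw [QT_recS, (ih p' q j' (by omega)).1, (ih p' q (j'+1) (by omega)).2, cfT_recS]
    · rcases q with _ | q'
      · rw [QF_zero]; simp [cfF]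
      · rw [QF_rec, (ih p q' j (by omega)).1, (ih p q' j (by omega)).2, cfF_rec]

lemma card_CP (n k : ℕ) (hn : 1 ≤ n) :
    Nat.card {l : List Bool // CP n n k l} = cfT n n k + cfF n n k := by
  rw [card_three_split (CP n n k) (n+n) (CP_len n n k)]
  have hz : Nat.card {l : List Bool //
      CP n n k l ∧ ¬ l.head? = some true ∧ ¬ l.head? = some false} = 0 := by
    rw [card_nil_piece]
    rw [if_neg (by omega)]
  rw [hz]
  have hQ := QTF_closed (n+n) n n k le_rfl
  unfold QT QF at hQ
  omega

lemma flaws_le (n k : ℕ) (l : List Bool) (h : CP n n k l) : flaws l ≤ n := by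
  rw [flaws_eq]
  calc cnt true 0 l ≤ l.count true := cnt_le_count true 0 l
    _ = n := h.1


lemma card_const (n k m₁ m₂ : ℕ) (h1 : m₁ ≤ n) (h2 : m₂ ≤ n) :
    Nat.card {l : List Bool // CP n n k l ∧ flaws l = m₁}
      = Nat.card {l : List Bool // CP n n k l ∧ flaws l = m₂} := by
  have e : ∀ mm, Nat.card {l : List Bool // CP n n k l ∧ flaws l = mm}
      = Nat.card {l : List Bool //
          (l.count true = n ∧ l.count false = n) ∧ flaws l = mm ∧ das l = k} := by
    intro mm
    apply Nat.card_congr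
    apply Equiv.subtypeEquivRight
    intro l
    unfold CP
    tauto
  rw [e m₁, e m₂]
  exact card_rot n k m₁ m₂ h1 h2

end DCF

/-- Chung-Feller theorem for double ascents: `(k+1) a_{n,m,k} = C(n-1,k) C(n,k)`,
i.e. `a_{n,m,k}` is the Narayana number, independently of `m`. -/
theorem dascent_chung_feller (n m k : ℕ) (hn : 1 ≤ n) (hk : k ≤ n - 1) (hm : m ≤ n) :
    (k + 1) * a n m k = Nat.choose (n - 1) k * Nat.choose n k := by
  classical
  have ha : ∀ m', a n m' k = Nat.card {l : List Bool // DCF.CP n n k l ∧ flaws l = m'} := by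
    intro m'
    unfold a
    apply Nat.card_congr
    apply Equiv.subtypeEquivRight
    intro l
    rw [DCF.isDyck_iff, DCF.dascents_eq]
    unfold DCF.CP
    tauto
  set c := Nat.card {l : List Bool // DCF.CP n n k l ∧ flaws l = m} with hc
  have hsum : ∀ M, M ≤ n →
      Nat.card {l : List Bool // DCF.CP n n k l ∧ flaws l ≤ M} = (M+1) * c := by
    intro M
    induction M with
    | zero =>
      intro _
      rw [show ((0:ℕ)+1) * c = c from by ring, hc]
      rw [show Nat.card {l : List Bool // DCF.CP n n k l ∧ flaws l ≤ 0}
          = Nat.card {l : List Bool // DCF.CP n n k l ∧ flaws l = 0} from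
        Nat.card_congr (Equiv.subtypeEquivRight (fun l => by
          constructor
          · rintro ⟨h1, h2⟩; exact ⟨h1, by omega⟩
          · rintro ⟨h1, h2⟩; exact ⟨h1, by omega⟩))]
      exact DCF.card_const n k 0 m (by omega) hm
    | succ M ih =>
      intro hM
      rw [DCF.card_split (fun l => DCF.CP n n k l ∧ flaws l ≤ M+1) (fun l => flaws l ≤ M)
        (n+n) (fun l h => DCF.CP_len n n k l h.1)]
      have e1 : Nat.card {l : List Bool // (DCF.CP n n k l ∧ flaws l ≤ M+1) ∧ flaws l ≤ M}
          = Nat.card {l : List Bool // DCF.CP n n k l ∧ flaws l ≤ M} :=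
        Nat.card_congr (Equiv.subtypeEquivRight (fun l => by
          constructor
          · rintro ⟨⟨h1, h2⟩, h3⟩; exact ⟨h1, h3⟩
          · rintro ⟨h1, h3⟩; exact ⟨⟨h1, by omega⟩, h3⟩))
      have e2 : Nat.card {l : List Bool // (DCF.CP n n k l ∧ flaws l ≤ M+1) ∧ ¬ flaws l ≤ M}
          = Nat.card {l : List Bool // DCF.CP n n k l ∧ flaws l = M+1} :=
        Nat.card_congr (Equiv.subtypeEquivRight (fun l => by
          constructor
          · rintro ⟨⟨h1, h2⟩, h3⟩; exact ⟨h1, by omega⟩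
          · rintro ⟨h1, h3⟩; exact ⟨⟨h1, by omega⟩, by omega⟩))
      rw [e1, e2, ih (by omega), DCF.card_const n k (M+1) m (by omega) hm, ← hc]
      ring
  have hall : Nat.card {l : List Bool // DCF.CP n n k l} = (n+1) * c := by
    rw [← hsum n le_rfl]
    apply Nat.card_congr
    apply Equiv.subtypeEquivRight
    intro l
    constructor
    · intro h1
      exact ⟨h1, DCF.flaws_le n k l h1⟩
    · rintro ⟨h1, -⟩
      exact h1
  have htot : (n+1) * c = DCF.cfT n n k + DCF.cfF n n k := by
    rw [← hall]
    exact DCF.card_CP n k hn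
  have hcf : DCF.cfT n n k + DCF.cfF n n k
      = Nat.choose (n-1) k * Nat.choose (n+1) (n-k) := by
    unfold DCF.cfT DCF.cfF
    rw [if_neg (by omega), if_neg (by omega)]
    have hpascal : Nat.choose (n+1) (n-k) = Nat.choose n (n-k-1) + Nat.choose n (n-k) := by
      obtain ⟨r, hr⟩ : ∃ r, n - k = r + 1 := ⟨n-k-1, by omega⟩
      rw [hr, Nat.choose_succ_succ]
      simp [Nat.succ_eq_add_one]
    rw [hpascal]
    ring
  have hsymm : Nat.choose (n+1) (n-k) = Nat.choose (n+1) (k+1) := by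
    rw [show n - k = (n+1) - (k+1) from by omega]
    exact Nat.choose_symm (by omega)
  have h1 : (n+1) * a n m k = Nat.choose (n-1) k * Nat.choose (n+1) (k+1) := by
    rw [ha m, ← hc, htot, hcf, hsymm]
  have hfin : (n+1) * ((k+1) * a n m k) = (n+1) * (Nat.choose (n-1) k * Nat.choose n k) := by
    calc (n+1) * ((k+1) * a n m k) = (k+1) * ((n+1) * a n m k) := by ring
      _ = (k+1) * (Nat.choose (n-1) k * Nat.choose (n+1) (k+1)) := by rw [h1]
      _ = Nat.choose (n-1) k * ((k+1) * Nat.choose (n+1) (k+1)) := by ring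
      _ = Nat.choose (n-1) k * ((n+1) * Nat.choose n k) := by
          congr 1
          calc (k+1) * Nat.choose (n+1) (k+1)
              = Nat.choose (n+1) (k+1) * (k+1) := mul_comm _ _
            _ = (n+1) * Nat.choose n k := (Nat.add_one_mul_choose_eq n k).symm
      _ = (n+1) * (Nat.choose (n-1) k * Nat.choose n k) := by ring
  exact Nat.eq_of_mul_eq_mul_left (by omega) hfin
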